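/- Let R be a commutative ring and x, y elements of R such that Ann(x) = (y) and Ann(y) = (x). Then the complex ⋯ → R →^x R →^y R →^x R →^y ⋯ is acyclic, and remains acyclic after applying Hom_R(−, R); in particular the ideals (x) and (y) are totally reflexive R-modules. -/

import Mathlib

universe u

open TensorProduct

/-- A `ℤ`-indexed chain complex of `R`-modules: modules `X i` with
differentials `d i : X (i+1) →ₗ[R] X i` satisfying `d ∘ d = 0`. -/
structure ModComplex (R : Type u) [CommRing R] : Type (u + 1) where
  X : ℤ → Type u
  [addCommGroup : ∀ i, AddCommGroup (X i)]
  [module : ∀ i, Module R (X i)]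
  d : ∀ i : ℤ, X (i + 1) →ₗ[R] X i
  dd : ∀ i : ℤ, (d i).comp (d (i + 1)) = 0

attribute [instance] ModComplex.addCommGroup ModComplex.module

namespace ModComplex

variable {R : Type u} [CommRing R] (L : ModComplex R)

/-- The complex is acyclic: exact at every spot. -/
def Acyclic : Prop := ∀ i : ℤ, Function.Exact (L.d (i + 1)) (L.d i)

/-- The complex `Hom_R(L, N)` is acyclic. -/
def HomAcyclic (N : Type u) [AddCommGroup N] [Module R N] : Prop :=
  ∀ i : ℤ, Function.Exact
    (fun φ : L.X i →ₗ[R] N => φ.comp (L.d i))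
    (fun φ : L.X (i + 1) →ₗ[R] N => φ.comp (L.d (i + 1)))

/-- The complex `Hom_R(E, L)` is acyclic. -/
def CoHomAcyclic (E : Type u) [AddCommGroup E] [Module R E] : Prop :=
  ∀ i : ℤ, Function.Exact
    (fun φ : E →ₗ[R] L.X (i + 1 + 1) => (L.d (i + 1)).comp φ)
    (fun φ : E →ₗ[R] L.X (i + 1) => (L.d i).comp φ)

/-- The complex `E ⊗_R L` is acyclic. -/
def TensorAcyclic (E : Type u) [AddCommGroup E] [Module R E] : Prop :=
  ∀ i : ℤ, Function.Exact
    (LinearMap.lTensor E (L.d (i + 1)))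
    (LinearMap.lTensor E (L.d i))

/-- The complex consists of finitely generated projective modules. -/
def FGProj : Prop :=
  ∀ i : ℤ, Module.Finite R (L.X i) ∧ Module.Projective R (L.X i)

/-- A totally acyclic complex: an acyclic complex of finitely generated
projective modules such that `Hom_R(L, R)` is acyclic. -/
def TotallyAcyclic : Prop := L.Acyclic ∧ L.FGProj ∧ L.HomAcyclic R

end ModComplex

/-- `M` is (isomorphic to) the cokernel of the differential `d 0 : X 1 → X 0`. -/
def IsCokerOf {R : Type u} [CommRing R] (L : ModComplex R)
    (M : Type u) [AddCommGroup M] [Module R M] : Prop :=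
  ∃ f : L.X 0 →ₗ[R] M, Function.Surjective f ∧ LinearMap.ker f = LinearMap.range (L.d 0)

/-- `M` is (isomorphic to) the kernel of the differential `d 0 : X 1 → X 0`. -/
def IsKerOf {R : Type u} [CommRing R] (L : ModComplex R)
    (M : Type u) [AddCommGroup M] [Module R M] : Prop :=
  ∃ f : M →ₗ[R] L.X 1, Function.Injective f ∧ LinearMap.range f = LinearMap.ker (L.d 0)

/-- `M` is totally reflexive: it is a cokernel of a differential in a totally
acyclic complex of finitely generated projective modules. -/
def IsTotallyReflexive (R : Type u) [CommRing R]
    (M : Type u) [AddCommGroup M] [Module R M] : Prop :=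
  ∃ L : ModComplex R, L.TotallyAcyclic ∧ IsCokerOf L M

/-- Gorenstein projective module. -/
def IsGorensteinProjective (R : Type u) [CommRing R]
    (A : Type u) [AddCommGroup A] [Module R A] : Prop :=
  ∃ L : ModComplex R, L.Acyclic ∧ (∀ i, Module.Projective R (L.X i)) ∧
    (∀ (Q : Type u) [AddCommGroup Q] [Module R Q],
      Module.Projective R Q → L.HomAcyclic Q) ∧
    IsCokerOf L A

/-- Gorenstein injective module. -/
def IsGorensteinInjective (R : Type u) [CommRing R]
    (B : Type u) [AddCommGroup B] [Module R B] : Prop :=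
  ∃ L : ModComplex R, L.Acyclic ∧ (∀ i, Module.Injective R (L.X i)) ∧
    (∀ (E : Type u) [AddCommGroup E] [Module R E],
      Module.Injective R E → L.CoHomAcyclic E) ∧
    IsKerOf L B

/-- Gorenstein flat module. -/
def IsGorensteinFlat (R : Type u) [CommRing R]
    (M : Type u) [AddCommGroup M] [Module R M] : Prop :=
  ∃ L : ModComplex R, L.Acyclic ∧ (∀ i, Module.Flat R (L.X i)) ∧
    (∀ (E : Type u) [AddCommGroup E] [Module R E],
      Module.Injective R E → L.TensorAcyclic E) ∧
    IsCokerOf L M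

/-- `M` has projective dimension at most `n`. -/
def ProjDimLe (R : Type u) [CommRing R] :
    ℕ → ∀ (M : Type u) [AddCommGroup M] [Module R M], Prop
  | 0, M, _, _ => Module.Projective R M
  | n + 1, M, _, _ =>
    ∃ (P : Type u) (_ : AddCommGroup P) (_ : Module R P) (f : P →ₗ[R] M),
      Module.Projective R P ∧ Function.Surjective f ∧
        ProjDimLe R n (LinearMap.ker f)

/-- `M` has flat dimension at most `n`. -/
def FlatDimLe (R : Type u) [CommRing R] :
    ℕ → ∀ (M : Type u) [AddCommGroup M] [Module R M], Prop
  | 0, M, _, _ => Module.Flat R M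
  | n + 1, M, _, _ =>
    ∃ (F : Type u) (_ : AddCommGroup F) (_ : Module R F) (f : F →ₗ[R] M),
      Module.Flat R F ∧ Function.Surjective f ∧
        FlatDimLe R n (LinearMap.ker f)

/-- `M` has Gorenstein projective dimension at most `n`. -/
def GProjDimLe (R : Type u) [CommRing R] :
    ℕ → ∀ (M : Type u) [AddCommGroup M] [Module R M], Prop
  | 0, M, _, _ => IsGorensteinProjective R M
  | n + 1, M, _, _ =>
    ∃ (P : Type u) (_ : AddCommGroup P) (_ : Module R P) (f : P →ₗ[R] M),
      IsGorensteinProjective R P ∧ Function.Surjective f ∧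
        GProjDimLe R n (LinearMap.ker f)

/-- The projective dimension, as an element of `ℕ∞`. -/
noncomputable def projDim (R : Type u) [CommRing R]
    (M : Type u) [AddCommGroup M] [Module R M] : ℕ∞ :=
  sInf {n : ℕ∞ | ∃ m : ℕ, n = m ∧ ProjDimLe R m M}

/-- The Gorenstein projective dimension, as an element of `ℕ∞`. -/
noncomputable def gProjDim (R : Type u) [CommRing R]
    (M : Type u) [AddCommGroup M] [Module R M] : ℕ∞ :=
  sInf {n : ℕ∞ | ∃ m : ℕ, n = m ∧ GProjDimLe R m M}

/-- The complex `⋯ → R →^x R →^y R →^x R →^y ⋯`, with multiplication by `x`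
as the differential in even degrees and by `y` in odd degrees. -/
def uvComplex (R : Type u) [CommRing R] (x y : R) (hxy : x * y = 0) :
    ModComplex R where
  X _ := R
  d i := if Even i then LinearMap.lsmul R R x else LinearMap.lsmul R R y
  dd i := by
    ext
    by_cases h : Even i
    · have h1 : ¬ Even (i + 1) := by simp [Int.even_add_one, h]
      simp [h, h1, smul_eq_mul, ← mul_assoc, hxy]
    · have h1 : Even (i + 1) := by simpa [Int.even_add_one] using h
      simp [h, h1, smul_eq_mul, ← mul_assoc, mul_comm y x, hxy]

section Aux

variable {R : Type u} [CommRing R]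

lemma uv_d_even (x y : R) (hxy : x * y = 0) {i : ℤ} (h : Even i) :
    (uvComplex R x y hxy).d i = LinearMap.lsmul R R x := if_pos h

lemma uv_d_odd (x y : R) (hxy : x * y = 0) {i : ℤ} (h : ¬ Even i) :
    (uvComplex R x y hxy).d i = LinearMap.lsmul R R y := if_neg h

lemma uv_exact_step (u v : R)
    (hv : ∀ r : R, r * v = 0 ↔ r ∈ Ideal.span {u}) (a : R) :
    v * a = 0 ↔ ∃ b : R, u * b = a := by
  rw [mul_comm, hv, Ideal.mem_span_singleton']
  exact ⟨fun ⟨b, hb⟩ => ⟨b, by rw [mul_comm]; exact hb⟩,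
    fun ⟨b, hb⟩ => ⟨b, by rw [mul_comm]; exact hb⟩⟩

lemma uv_hom_step (u v : R)
    (hv : ∀ r : R, r * v = 0 ↔ r ∈ Ideal.span {u})
    (φ : R →ₗ[R] R) (h0 : φ.comp (LinearMap.lsmul R R v) = 0) :
    ∃ ψ : R →ₗ[R] R, ψ.comp (LinearMap.lsmul R R u) = φ := by
  have h1 : φ 1 * v = 0 := by
    have h2 := LinearMap.congr_fun h0 1
    simp only [LinearMap.coe_comp, Function.comp_apply, LinearMap.lsmul_apply,
      smul_eq_mul, mul_one, LinearMap.zero_apply] at h2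
    calc φ 1 * v = v * φ 1 := mul_comm _ _
    _ = φ (v * 1) := (map_smul φ v 1).symm
    _ = 0 := by rw [mul_one, h2]
  obtain ⟨b, hb⟩ := Ideal.mem_span_singleton'.mp ((hv _).mp h1)
  refine ⟨b • LinearMap.id, LinearMap.ext_ring ?_⟩
  simp only [LinearMap.coe_comp, Function.comp_apply, LinearMap.lsmul_apply,
    smul_eq_mul, mul_one, LinearMap.smul_apply, LinearMap.id_apply]
  exact hb

lemma uv_acyclic (x y : R)
    (hx : ∀ r : R, r * x = 0 ↔ r ∈ Ideal.span {y})
    (hy : ∀ r : R, r * y = 0 ↔ r ∈ Ideal.span {x})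
    (hxy : x * y = 0) : (uvComplex R x y hxy).Acyclic := by
  intro i a
  by_cases h : Even i
  · have h1 : ¬ Even (i + 1) := by simp [Int.even_add_one, h]
    rw [uv_d_even x y hxy h, uv_d_odd x y hxy h1]
    exact uv_exact_step y x hx a
  · have h1 : Even (i + 1) := by simpa [Int.even_add_one] using h
    rw [uv_d_odd x y hxy h, uv_d_even x y hxy h1]
    exact uv_exact_step x y hy a

lemma uv_homAcyclic (x y : R)
    (hx : ∀ r : R, r * x = 0 ↔ r ∈ Ideal.span {y})
    (hy : ∀ r : R, r * y = 0 ↔ r ∈ Ideal.span {x})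
    (hxy : x * y = 0) : (uvComplex R x y hxy).HomAcyclic R := by
  intro i φ
  constructor
  · intro h0
    by_cases h : Even i
    · have h1 : ¬ Even (i + 1) := by simp [Int.even_add_one, h]
      rw [uv_d_odd x y hxy h1] at h0
      rw [uv_d_even x y hxy h]
      exact uv_hom_step x y hy φ h0
    · have h1 : Even (i + 1) := by simpa [Int.even_add_one] using h
      rw [uv_d_even x y hxy h1] at h0
      rw [uv_d_odd x y hxy h]
      exact uv_hom_step y x hx φ h0
  · rintro ⟨ψ, rfl⟩
    show (ψ.comp ((uvComplex R x y hxy).d i)).comp ((uvComplex R x y hxy).d (i + 1)) = 0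
    rw [LinearMap.comp_assoc, (uvComplex R x y hxy).dd i, LinearMap.comp_zero]

lemma uv_totallyAcyclic (x y : R)
    (hx : ∀ r : R, r * x = 0 ↔ r ∈ Ideal.span {y})
    (hy : ∀ r : R, r * y = 0 ↔ r ∈ Ideal.span {x})
    (hxy : x * y = 0) : (uvComplex R x y hxy).TotallyAcyclic :=
  ⟨uv_acyclic x y hx hy hxy,
    fun _ => ⟨inferInstanceAs (Module.Finite R R),
      inferInstanceAs (Module.Projective R R)⟩,
    uv_homAcyclic x y hx hy hxy⟩

lemma uv_coker (x y : R)
    (hx : ∀ r : R, r * x = 0 ↔ r ∈ Ideal.span {y})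
    (hyx : y * x = 0) :
    IsCokerOf (uvComplex R y x hyx) (Ideal.span {x} : Ideal R) := by
  refine ⟨LinearMap.codRestrict (Ideal.span {x} : Ideal R)
      (LinearMap.lsmul R R x)
      (fun (r : R) => Ideal.mem_span_singleton'.mpr ⟨r, mul_comm r x⟩), ?_, ?_⟩
  · rintro ⟨a, ha⟩
    obtain ⟨b, hb⟩ := Ideal.mem_span_singleton'.mp ha
    exact ⟨b, Subtype.ext (show x * b = a by rw [mul_comm]; exact hb)⟩
  · ext r
    rw [uv_d_even y x hyx Even.zero]
    change _ ∈ LinearMap.ker (LinearMap.codRestrict (Ideal.span {x} : Ideal R)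
      (LinearMap.lsmul R R x) _) ↔ _
    rw [LinearMap.mem_ker, Subtype.ext_iff]
    simp only [LinearMap.codRestrict_apply, LinearMap.lsmul_apply, smul_eq_mul,
      ZeroMemClass.coe_zero, LinearMap.mem_range]
    exact uv_exact_step y x hx r

end Aux

/-- If `Ann(x) = (y)` and `Ann(y) = (x)`, then the complex
`⋯ → R →^x R →^y R → ⋯` is totally acyclic; in particular `(x)` and `(y)`
are totally reflexive `R`-modules. -/
theorem uvComplex_totallyAcyclic_and_totallyReflexive
    {R : Type u} [CommRing R] (x y : R)
    (hx : ∀ r : R, r * x = 0 ↔ r ∈ Ideal.span {y})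
    (hy : ∀ r : R, r * y = 0 ↔ r ∈ Ideal.span {x}) :
    (uvComplex R x y ((hy x).mpr (Ideal.subset_span rfl))).TotallyAcyclic ∧
    IsTotallyReflexive R (Ideal.span {x} : Ideal R) ∧
    IsTotallyReflexive R (Ideal.span {y} : Ideal R) := by

  have hxy : x * y = 0 := (hy x).mpr (Ideal.subset_span rfl)
  have hyx : y * x = 0 := (hx y).mpr (Ideal.subset_span rfl)
  exact ⟨uv_totallyAcyclic x y hx hy hxy,
    ⟨uvComplex R y x hyx, uv_totallyAcyclic y x hy hx hyx, uv_coker x y hx hyx⟩,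
    ⟨uvComplex R x y hxy, uv_totallyAcyclic x y hx hy hxy, uv_coker y x hy hxy⟩⟩
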